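/- Let f : ℝ → ℝ be Bohr almost periodic and let g be an element of the hull E(f). Then g is Bohr almost periodic and its frequency module equals that of f: M_g = M_f. -/

import Mathlib

open Filter Topology MeasureTheory Set

noncomputable section

/-- A continuous function `f : ℝ → E` is Bohr almost periodic if every sequence of reals
has a subsequence along which the translates converge uniformly on `ℝ`. -/
def BohrAP {E : Type*} [NormedAddCommGroup E] (f : ℝ → E) : Prop :=
  Continuous f ∧ ∀ t : ℕ → ℝ, ∃ (s : ℕ → ℕ) (g : ℝ → E),
    StrictMono s ∧ TendstoUniformly (fun n x => f (x + t (s n))) g atTop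

/-- The hull of `f`: uniform limits of sequences of translates of `f`. -/
def Hull {E : Type*} [NormedAddCommGroup E] (f : ℝ → E) : Set (ℝ → E) :=
  {g | ∃ t : ℕ → ℝ, TendstoUniformly (fun n x => f (x + t n)) g atTop}

/-- `AP₊(ℝ,ℝ)`: Bohr almost periodic functions all of whose hull elements are
strictly positive at every point. -/
def APplus (f : ℝ → ℝ) : Prop :=
  BohrAP f ∧ ∀ g ∈ Hull f, ∀ x : ℝ, 0 < g x

/-- The set of Fourier exponents of `f`: those `l` for which the Fourier coefficient
`lim_{T→∞} (1/T) ∫₀^T f(x) e^{-i l x} dx` is nonzero (encoded as: the averages do not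
tend to `0`; for Bohr almost periodic `f` the limit always exists). -/
def freqSet (f : ℝ → ℝ) : Set ℝ :=
  {l : ℝ | ¬ Tendsto
      (fun T : ℝ => (T : ℂ)⁻¹ *
        ∫ x in (0:ℝ)..T, (f x : ℂ) * Complex.exp (-(Complex.I * (l : ℂ) * (x : ℂ))))
      atTop (𝓝 0)}

/-- The frequency module of `f`: the smallest additive subgroup of `ℝ` containing the
Fourier exponents of `f`. -/
def freqModule (f : ℝ → ℝ) : AddSubgroup ℝ := AddSubgroup.closure (freqSet f)

/-- `θ` solves the Prüfer equation `θ' = a cos²θ + (λ w - q) sin²θ`. -/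
def IsPruefer (a q w : ℝ → ℝ) (lam : ℝ) (θ : ℝ → ℝ) : Prop :=
  ∀ x : ℝ, HasDerivAt θ
    (a x * Real.cos (θ x) ^ 2 + (lam * w x - q x) * Real.sin (θ x) ^ 2) x

/-- `φ` is a (real) solution of the Sturm–Liouville equation `-(pφ')' + qφ = λ w φ`:
`φ` is `C¹`, `pφ'` is `C¹`, and the equation holds everywhere. -/
def IsSLSolution (p q w : ℝ → ℝ) (lam : ℝ) (φ : ℝ → ℝ) : Prop :=
  ContDiff ℝ 1 φ ∧ ContDiff ℝ 1 (fun x => p x * deriv φ x) ∧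
    ∀ x : ℝ, -(deriv (fun y => p y * deriv φ y) x) + q x * φ x = lam * w x * φ x

/-- every element of the hull of a Bohr almost periodic function is
Bohr almost periodic with the same frequency module. -/

noncomputable def kerE (l x : ℝ) : ℂ := Complex.exp (-(Complex.I * (l : ℂ) * (x : ℂ)))

noncomputable def avg (f : ℝ → ℝ) (l T : ℝ) : ℂ :=
  (T : ℂ)⁻¹ * ∫ x in (0:ℝ)..T, (f x : ℂ) * kerE l x

lemma norm_kerE (l x : ℝ) : ‖kerE l x‖ = 1 := by
  unfold kerE; rw [Complex.norm_exp]; simp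

lemma cont_kerE (l : ℝ) : Continuous (fun x => kerE l x) := by
  unfold kerE; fun_prop

lemma contF {f : ℝ → ℝ} (hf : Continuous f) (l : ℝ) :
    Continuous (fun x => (f x : ℂ) * kerE l x) :=
  (Complex.continuous_ofReal.comp hf).mul (cont_kerE l)

lemma kerE_translate (l t x : ℝ) :
    kerE l x = Complex.exp (Complex.I * l * t) * kerE l (x + t) := by
  unfold kerE; rw [← Complex.exp_add]; push_cast; ring_nf

/-- The average of a translate tends to 0 if the average does. -/
lemma avg_translate_tendsto {f : ℝ → ℝ} (hf : Continuous f) (l t : ℝ)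
    (h : Tendsto (avg f l) atTop (𝓝 0)) :
    Tendsto (avg (fun x => f (x + t)) l) atTop (𝓝 0) := by
  set F : ℝ → ℂ := fun x => (f x : ℂ) * kerE l x with hF
  have hFc : Continuous F := contF hf l
  set C : ℂ := ∫ x in (0:ℝ)..t, F x with hC
  have key : ∀ T : ℝ, (∫ x in (0:ℝ)..T, (f (x + t) : ℂ) * kerE l x) =
      Complex.exp (Complex.I * l * t) * ((∫ x in (0:ℝ)..(T + t), F x) - C) := by
    intro T
    calc (∫ x in (0:ℝ)..T, (f (x + t) : ℂ) * kerE l x)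
        = ∫ x in (0:ℝ)..T, Complex.exp (Complex.I * l * t) * F (x + t) := by
          apply intervalIntegral.integral_congr
          intro x _
          rw [hF]; simp only
          rw [kerE_translate l t x]; ring
      _ = Complex.exp (Complex.I * l * t) * ∫ x in (0:ℝ)..T, F (x + t) := by
          rw [intervalIntegral.integral_const_mul]
      _ = Complex.exp (Complex.I * l * t) * ∫ x in (0+t)..(T + t), F x := by
          rw [intervalIntegral.integral_comp_add_right]
      _ = Complex.exp (Complex.I * l * t) * ((∫ x in (0:ℝ)..(T + t), F x) - C) := by
          rw [zero_add, ← intervalIntegral.integral_interval_sub_left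
            (hFc.intervalIntegrable _ _) (hFc.intervalIntegrable _ _)]
  -- limit expression
  have h1 : Tendsto (fun T : ℝ => avg f l (T + t)) atTop (𝓝 0) :=
    h.comp (tendsto_atTop_add_const_right _ t tendsto_id)
  have hinv : Tendsto (fun T : ℝ => ((T : ℂ))⁻¹) atTop (𝓝 0) := by
    have : Tendsto (fun T : ℝ => ((T⁻¹ : ℝ) : ℂ)) atTop (𝓝 ((0:ℝ):ℂ)) :=
      (Complex.continuous_ofReal.tendsto _).comp tendsto_inv_atTop_zero
    simpa using this
  have h2 : Tendsto (fun T : ℝ => Complex.exp (Complex.I * l * t) *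
      ((1 + (T : ℂ)⁻¹ * (t : ℂ)) * avg f l (T + t))
      - (T : ℂ)⁻¹ * (Complex.exp (Complex.I * l * t) * C)) atTop (𝓝 0) := by
    have ha : Tendsto (fun T : ℝ => Complex.exp (Complex.I * l * t) *
        ((1 + (T : ℂ)⁻¹ * (t : ℂ)) * avg f l (T + t))) atTop
        (𝓝 (Complex.exp (Complex.I * l * t) * ((1 + 0 * (t : ℂ)) * 0))) :=
      tendsto_const_nhds.mul ((tendsto_const_nhds.add (hinv.mul tendsto_const_nhds)).mul h1)
    have hb : Tendsto (fun T : ℝ => (T : ℂ)⁻¹ * (Complex.exp (Complex.I * l * t) * C)) atTop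
        (𝓝 (0 * (Complex.exp (Complex.I * l * t) * C))) := hinv.mul tendsto_const_nhds
    simpa using ha.sub hb
  apply h2.congr'
  filter_upwards [eventually_gt_atTop (0:ℝ), eventually_gt_atTop (-t)] with T hT0 hTt
  have hT : (T : ℂ) ≠ 0 := by exact_mod_cast hT0.ne'
  have hTt0 : T + t ≠ 0 := by linarith
  have hTt' : ((T + t : ℝ) : ℂ) ≠ 0 := by exact_mod_cast hTt0
  show _ = avg (fun x => f (x + t)) l T
  simp only [avg]
  rw [key T]
  push_cast
  have hTsum : (T:ℂ) + t ≠ 0 := by push_cast at hTt'; exact hTt'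
  field_simp
  ring

/-- averages of uniformly close functions are close. -/
lemma avg_close {u v : ℝ → ℝ} (hu : Continuous u) (hv : Continuous v)
    {l ε T : ℝ} (hT : 1 ≤ T) (hclose : ∀ x, |u x - v x| ≤ ε) :
    ‖avg u l T - avg v l T‖ ≤ ε := by
  have hT0 : 0 < T := lt_of_lt_of_le one_pos hT
  have hε : 0 ≤ ε := le_trans (abs_nonneg _) (hclose 0)
  have hdiff : avg u l T - avg v l T
      = (T : ℂ)⁻¹ * ∫ x in (0:ℝ)..T, ((u x - v x : ℝ) : ℂ) * kerE l x := by
    rw [avg, avg, ← mul_sub, ← intervalIntegral.integral_sub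
      ((contF hu l).intervalIntegrable _ _) ((contF hv l).intervalIntegrable _ _)]
    congr 1
    apply intervalIntegral.integral_congr
    intro x _
    push_cast
    ring
  rw [hdiff, norm_mul]
  have hbound : ‖∫ x in (0:ℝ)..T, ((u x - v x : ℝ) : ℂ) * kerE l x‖ ≤ ε * |T - 0| := by
    apply intervalIntegral.norm_integral_le_of_norm_le_const
    intro x _
    rw [norm_mul, norm_kerE, mul_one, Complex.norm_real, Real.norm_eq_abs]
    exact hclose x
  have hninv : ‖((T : ℂ))⁻¹‖ = T⁻¹ := by
    rw [norm_inv, Complex.norm_real, Real.norm_eq_abs, abs_of_pos hT0]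
  calc ‖((T:ℂ))⁻¹‖ * ‖∫ x in (0:ℝ)..T, ((u x - v x : ℝ) : ℂ) * kerE l x‖
      ≤ T⁻¹ * (ε * |T - 0|) := by rw [hninv]; exact mul_le_mul_of_nonneg_left hbound (by positivity)
    _ = ε := by rw [sub_zero, abs_of_pos hT0]; field_simp

/-- If translates of F converge uniformly to G, vanishing of averages transfers. -/
lemma avg_transfer {F G : ℝ → ℝ} (hFc : Continuous F) (t : ℕ → ℝ)
    (hu : TendstoUniformly (fun n x => F (x + t n)) G atTop) (l : ℝ)
    (h0 : Tendsto (avg F l) atTop (𝓝 0)) : Tendsto (avg G l) atTop (𝓝 0) := by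
  have hGc : Continuous G := hu.continuous (Frequently.of_forall fun n =>
    hFc.comp (continuous_id.add continuous_const))
  rw [Metric.tendsto_nhds]
  intro ε hε
  obtain ⟨n, hn⟩ := (Metric.tendstoUniformly_iff.mp hu (ε/2) (by linarith)).exists
  have hn' : ∀ x, |G x - F (x + t n)| ≤ ε/2 := fun x => by
    have := hn x
    rw [Real.dist_eq] at this
    exact this.le
  have h1 : Tendsto (avg (fun x => F (x + t n)) l) atTop (𝓝 0) :=
    avg_translate_tendsto hFc l (t n) h0
  rw [Metric.tendsto_nhds] at h1
  filter_upwards [h1 (ε/2) (by linarith), eventually_ge_atTop (1:ℝ)] with T hT1 hT2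
  have hclose := avg_close hGc (hFc.comp (continuous_id.add continuous_const))
    (l := l) hT2 hn'
  rw [dist_zero_right] at hT1 ⊢
  calc ‖avg G l T‖ ≤ ‖avg G l T - avg (fun x => F (x + t n)) l T‖
        + ‖avg (fun x => F (x + t n)) l T‖ := by
        simpa using norm_add_le (avg G l T - avg (fun x => F (x + t n)) l T)
          (avg (fun x => F (x + t n)) l T)
    _ < ε/2 + ε/2 := add_lt_add_of_le_of_lt hclose hT1
    _ = ε := by ring

theorem hull_freqModule (f g : ℝ → ℝ) (hf : BohrAP f) (hg : g ∈ Hull f) :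
    BohrAP g ∧ freqModule g = freqModule f := by
  obtain ⟨hfc, hfap⟩ := hf
  obtain ⟨τ, hts⟩ := hg
  have hGc : Continuous g := hts.continuous (Frequently.of_forall fun n =>
    hfc.comp (continuous_id.add continuous_const))
  -- the reversed uniform convergence: translates of g converge to f
  have hrev : TendstoUniformly (fun n x => g (x + (-τ n))) f atTop := by
    rw [Metric.tendstoUniformly_iff] at hts ⊢
    intro ε hε
    filter_upwards [hts ε hε] with n hn x
    have := hn (x - τ n)
    rw [sub_add_cancel] at this
    rw [dist_comm] at this
    simpa [sub_eq_add_neg] using this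
  -- equality of frequency sets
  have hFS : freqSet g = freqSet f := by
    ext l
    have h1 : Tendsto (avg f l) atTop (𝓝 0) → Tendsto (avg g l) atTop (𝓝 0) :=
      avg_transfer hfc τ hts l
    have h2 : Tendsto (avg g l) atTop (𝓝 0) → Tendsto (avg f l) atTop (𝓝 0) :=
      avg_transfer hGc (fun n => -τ n) hrev l
    simp only [freqSet, mem_setOf_eq]
    exact ⟨mt h1, mt h2⟩
  refine ⟨⟨hGc, ?_⟩, by unfold freqModule; rw [hFS]⟩
  -- Bohr almost periodicity of g
  intro t
  obtain ⟨s, h, hs, hh⟩ := hfap t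
  have ucauchy : UniformCauchySeqOn (fun k x => g (x + t (s k))) atTop univ := by
    rw [Metric.uniformCauchySeqOn_iff]
    intro ε hε
    obtain ⟨n, hn⟩ := (Metric.tendstoUniformly_iff.mp hts (ε/4) (by linarith)).exists
    obtain ⟨N, hN⟩ := (Metric.tendstoUniformly_iff.mp hh (ε/4) (by linarith)).exists_forall_of_atTop
    refine ⟨N, fun m hm k hk x _ => ?_⟩
    have hmid : dist (f (x + τ n + t (s m))) (f (x + τ n + t (s k))) < ε/2 := by
      have a1 := hN m hm (x + τ n)
      have a2 := hN k hk (x + τ n)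
      calc dist (f (x + τ n + t (s m))) (f (x + τ n + t (s k)))
          ≤ dist (f (x + τ n + t (s m))) (h (x + τ n))
            + dist (h (x + τ n)) (f (x + τ n + t (s k))) := dist_triangle _ _ _
        _ < ε/4 + ε/4 := add_lt_add (by rw [dist_comm]; exact a1) a2
        _ = ε/2 := by ring
    have b1 : dist (g (x + t (s m))) (f (x + τ n + t (s m))) < ε/4 := by
      have := hn (x + t (s m))
      rwa [show x + t (s m) + τ n = x + τ n + t (s m) by ring] at this
    have b2 : dist (f (x + τ n + t (s k))) (g (x + t (s k))) < ε/4 := by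
      have := hn (x + t (s k))
      rw [show x + t (s k) + τ n = x + τ n + t (s k) by ring] at this
      rwa [dist_comm] at this
    calc dist (g (x + t (s m))) (g (x + t (s k)))
        ≤ dist (g (x + t (s m))) (f (x + τ n + t (s m)))
          + dist (f (x + τ n + t (s m))) (f (x + τ n + t (s k)))
          + dist (f (x + τ n + t (s k))) (g (x + t (s k))) := dist_triangle4 _ _ _ _
      _ < ε := by linarith
  have hcauchy : ∀ x : ℝ, ∃ y : ℝ, Tendsto (fun k => g (x + t (s k))) atTop (𝓝 y) := by
    intro x
    apply cauchySeq_tendsto_of_complete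
    rw [Metric.cauchySeq_iff]
    intro ε hε
    obtain ⟨N, hN⟩ := Metric.uniformCauchySeqOn_iff.mp ucauchy ε hε
    exact ⟨N, fun m hm k hk => hN m hm k hk x (mem_univ x)⟩
  choose G hG using hcauchy
  refine ⟨s, G, hs, ?_⟩
  rw [← tendstoUniformlyOn_univ]
  exact ucauchy.tendstoUniformlyOn_of_tendsto fun x _ => hG x
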